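/- Let I be a uniformly Fréchet convergence ideal on B and suppose B is I-concentrated. Then the fragmentation {C_n} constructed from I is σ-bounded cc: for each k there is a bound K_k on the sizes of antichains contained in C_k. -/
import Mathlib


open Filter Topology

variable {α : Type*}

/-- A convergence ideal on a Boolean algebra: a set of infinite sequences
(i) with no nonzero common lower bound, (ii) closed under subsequences,
(iii) closed under minorization, (iv) closed under pairwise joins, and
(v) containing every infinite antichain (sequence of pairwise disjoint nonzero elements). -/
def IsConvIdeal [BooleanAlgebra α] (I : Set (ℕ → α)) : Prop :=
  (∀ a ∈ I, ∀ b : α, (∀ n, b ≤ a n) → b = ⊥) ∧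
  (∀ a ∈ I, ∀ φ : ℕ → ℕ, StrictMono φ → (fun n => a (φ n)) ∈ I) ∧
  (∀ a ∈ I, ∀ b : ℕ → α, (∀ n, b n ≤ a n) → b ∈ I) ∧
  (∀ a ∈ I, ∀ b ∈ I, (fun n => a n ⊔ b n) ∈ I) ∧
  (∀ a : ℕ → α, (∀ n, a n ≠ ⊥) → (∀ i j, i ≠ j → a i ⊓ a j = ⊥) → a ∈ I)

/-- `ConvTo I a c` : the sequence `a` converges to `c`, i.e. `{a n ∆ c} ∈ I`. -/
def ConvTo [BooleanAlgebra α] (I : Set (ℕ → α)) (a : ℕ → α) (c : α) : Prop :=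
  (fun n => symmDiff (a n) c) ∈ I

/-- `F k` picks a term of its argument sequence. -/
def IsSelective [BooleanAlgebra α] (F : ℕ → (ℕ → α) → α) : Prop :=
  ∀ k, ∀ x : ℕ → α, ∃ n, F k x = x n

/-- Uniform Fréchet property of a convergence ideal witnessed by choice functions `F`. -/
def UnifFrechet [BooleanAlgebra α] (I : Set (ℕ → α)) (F : ℕ → (ℕ → α) → α) : Prop :=
  ∀ x : ℕ → ℕ → α, (∀ k, x k ∈ I) → (fun k => F k (x k)) ∈ I

/-- `Vset I F k = {a : a ≤ F k x for some x ∈ I}`. -/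
def Vset [BooleanAlgebra α] (I : Set (ℕ → α)) (F : ℕ → (ℕ → α) → α) (k : ℕ) : Set α :=
  {a | ∃ x ∈ I, a ≤ F k x}

/-- `Uset I F n = Vset 0 ∩ ... ∩ Vset n`. -/
def Uset [BooleanAlgebra α] (I : Set (ℕ → α)) (F : ℕ → (ℕ → α) → α) (n : ℕ) : Set α :=
  {a | ∀ k ≤ n, a ∈ Vset I F k}

/-- `Cset I F n = B \\ Uset I F n`. -/
def Cset [BooleanAlgebra α] (I : Set (ℕ → α)) (F : ℕ → (ℕ → α) → α) (n : ℕ) : Set α :=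
  (Uset I F n)ᶜ

theorem stmt18 [BooleanAlgebra α]
    (I : Set (ℕ → α)) (hI : IsConvIdeal I)
    (F : ℕ → (ℕ → α) → α) (hsel : IsSelective F) (hunif : UnifFrechet I F)
    (hconc : ∀ A : ℕ → Finset α,
      (∀ n, (↑(A n) : Set α).Pairwise (fun a b => a ⊓ b = ⊥)) →
      (∀ n, (⊥ : α) ∉ A n) → (∀ n, n ≤ (A n).card) →
      ∃ a : ℕ → α, (∀ n, a n ∈ A n) ∧ a ∈ I) :
    ∀ k : ℕ, ∃ K : ℕ, ∀ t : Finset α, (↑t : Set α) ⊆ Cset I F k →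
      (↑t : Set α).Pairwise (fun a b => a ⊓ b = ⊥) → t.card ≤ K := by

  classical
  intro k
  by_contra h
  push_neg at h
  -- build big antichains inside Cset, without ⊥
  have hA : ∀ n : ℕ, ∃ t : Finset α, (↑t : Set α) ⊆ Cset I F k ∧
      (↑t : Set α).Pairwise (fun a b => a ⊓ b = ⊥) ∧ (⊥ : α) ∉ t ∧ n ≤ t.card := by
    intro n
    obtain ⟨t, ht1, ht2, ht3⟩ := h n
    refine ⟨t.erase ⊥, ?_, ?_, Finset.notMem_erase _ _, ?_⟩
    · exact fun x hx => ht1 (Finset.mem_coe.mpr (Finset.mem_of_mem_erase hx))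
    · exact ht2.mono (by intro x hx; exact Finset.mem_of_mem_erase hx)
    · have h1 : t.card - 1 ≤ (t.erase ⊥).card := Finset.pred_card_le_card_erase
      omega
  choose A hA1 hA2 hA3 hA4 using hA
  obtain ⟨a, ha1, ha2⟩ := hconc A hA2 hA3 hA4
  have haC : ∀ n, a n ∈ Cset I F k := fun n => hA1 n (ha1 n)
  -- each a n fails some Vset j, j ≤ k
  have hg : ∀ n, ∃ j : Fin (k + 1), a n ∉ Vset I F j := by
    intro n
    have := haC n
    simp only [Cset, Uset, Set.mem_compl_iff, Set.mem_setOf_eq] at this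
    push_neg at this
    obtain ⟨j, hj, hjv⟩ := this
    exact ⟨⟨j, Nat.lt_succ_of_le hj⟩, hjv⟩
  choose g hgv using hg
  obtain ⟨j, hj⟩ := Finite.exists_infinite_fiber g
  have hinf : {n | g n = j}.Infinite := by
    rw [← Set.infinite_coe_iff]; exact hj
  set p : ℕ → Prop := fun n => g n = j with hp
  have hmono : StrictMono (Nat.nth p) := Nat.nth_strictMono hinf
  have hb : (fun m => a (Nat.nth p m)) ∈ I := hI.2.1 a ha2 _ hmono
  obtain ⟨m, hm⟩ := hsel (j : ℕ) (fun m => a (Nat.nth p m))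
  have hmem : a (Nat.nth p m) ∈ Vset I F (j : ℕ) :=
    ⟨fun m => a (Nat.nth p m), hb, le_of_eq hm.symm⟩
  have hpm : p (Nat.nth p m) := Nat.nth_mem_of_infinite hinf m
  have : g (Nat.nth p m) = j := hpm
  exact hgv (Nat.nth p m) (this ▸ hmem)
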